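/- arXiv:0803.3208 — 2 statements merged into one kernel-verified Lean document; each statement's English description precedes it below -/
import Mathlib

section
/- First-derivative estimate for the symbol H(ξ) = |ξ|√(2+|ξ|²): there are absolute constants 0 < c ≤ C such that for all ξ, η ∈ ℝ³ \ {0} with |ξ| ≥ |η|, c [ (|ξ|/⟨ξ⟩)(|ξ| − |η|) + ⟨η⟩ |ξ/|ξ| − η/|η|| ] ≤ |∇H(ξ) − ∇H(η)| ≤ C [ (|ξ|/⟨ξ⟩)(|ξ| − |η|) + ⟨η⟩ |ξ/|ξ| − η/|η|| ]. -/
noncomputable section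

open scoped RealInnerProductSpace

abbrev V3 := EuclideanSpace ℝ (Fin 3)

/-- `⟨ξ⟩ = √(2+‖ξ‖²)` -/
def jap (x : V3) : ℝ := Real.sqrt (2 + ‖x‖ ^ 2)

/-- the symbol `H(ξ) = |ξ|√(2+|ξ|²)` -/
def Hfun (ξ : V3) : ℝ := ‖ξ‖ * jap ξ

lemma hasGradient_Hfun {x : V3} (hx : x ≠ 0) :
    HasGradientAt Hfun ((2 * (1 + ‖x‖ ^ 2) / (‖x‖ * jap x)) • x) x := by
  have hr : (0:ℝ) < ‖x‖ := norm_pos_iff.mpr hx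
  have hA0 : 0 < jap x := Real.sqrt_pos.mpr (by positivity)
  set u : ℝ := ‖x‖ ^ 2 with hu
  have hu0 : 0 < u := by positivity
  have hw : (0:ℝ) < 2 * u + u ^ 2 := by positivity
  have hq : HasFDerivAt (fun y : V3 => ‖y‖ ^ 2) (2 • (innerSL ℝ x)) x :=
    (hasStrictFDerivAt_norm_sq x).hasFDerivAt
  have hpoly : HasDerivAt (fun t : ℝ => 2 * t + t ^ 2) (2 + 2 * u) u := by
    have h1 : HasDerivAt (fun t : ℝ => 2 * t) 2 u := by
      simpa using (hasDerivAt_id u).const_mul (2:ℝ)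
    have h2 : HasDerivAt (fun t : ℝ => t ^ 2) (2 * u) u := by
      simpa using hasDerivAt_pow 2 u
    exact h1.add h2
  have hsqrt : HasDerivAt Real.sqrt (1 / (2 * Real.sqrt (2 * u + u ^ 2))) (2 * u + u ^ 2) :=
    Real.hasDerivAt_sqrt hw.ne'
  have hcomp1 : HasDerivAt (fun t : ℝ => Real.sqrt (2 * t + t ^ 2))
      ((1 / (2 * Real.sqrt (2 * u + u ^ 2))) * (2 + 2 * u)) u := hsqrt.comp u hpoly
  have hcomp : HasFDerivAt (fun y : V3 => Real.sqrt (2 * ‖y‖ ^ 2 + (‖y‖ ^ 2) ^ 2))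
      (((1 / (2 * Real.sqrt (2 * u + u ^ 2))) * (2 + 2 * u)) • (2 • innerSL ℝ x)) x :=
    by have := hcomp1.comp_hasFDerivAt x hq; exact this
  have hsw : Real.sqrt (2 * u + u ^ 2) = ‖x‖ * jap x := by
    rw [show 2 * u + u ^ 2 = ‖x‖ ^ 2 * (2 + ‖x‖ ^ 2) by rw [hu]; ring,
      Real.sqrt_mul (by positivity), Real.sqrt_sq (norm_nonneg x)]
    rfl
  have hfun_eq : Hfun = fun y : V3 => Real.sqrt (2 * ‖y‖ ^ 2 + (‖y‖ ^ 2) ^ 2) := by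
    funext y
    rw [show 2 * ‖y‖ ^ 2 + (‖y‖ ^ 2) ^ 2 = ‖y‖ ^ 2 * (2 + ‖y‖ ^ 2) by ring,
      Real.sqrt_mul (by positivity), Real.sqrt_sq (norm_nonneg y)]
    rfl
  rw [hfun_eq, hasGradientAt_iff_hasFDerivAt]
  refine hcomp.congr_fderiv ?_
  ext y
  have hne : ‖x‖ * jap x ≠ 0 := by positivity
  simp only [InnerProductSpace.toDual_apply_apply, ContinuousLinearMap.smul_apply, innerSL_apply_apply,
    real_inner_smul_left, smul_eq_mul, two_smul, ContinuousLinearMap.add_apply]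
  rw [hsw]
  field_simp
  ring

lemma core_ineq (r s A B d N : ℝ) (hr : 0 < r) (hs : 0 < s) (hsr : s ≤ r)
    (hA : A ^ 2 = 2 + r ^ 2) (hB : B ^ 2 = 2 + s ^ 2) (hA0 : 0 < A) (hB0 : 0 < B)
    (hd0 : 0 ≤ d) (hd2 : d ≤ 2) (hN0 : 0 ≤ N)
    (hN : N ^ 2 = (2 * (1 + r ^ 2) / A - 2 * (1 + s ^ 2) / B) ^ 2
        + (2 * (1 + r ^ 2) / A) * (2 * (1 + s ^ 2) / B) * d ^ 2) :
    (1 / 2) * (r / A * (r - s) + B * d) ≤ N ∧ N ≤ 30 * (r / A * (r - s) + B * d) := by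
  set a : ℝ := 2 * (1 + r ^ 2) / A with ha_def
  set b : ℝ := 2 * (1 + s ^ 2) / B with hb_def
  set P : ℝ := r / A * (r - s) with hP_def
  set Q : ℝ := B * d with hQ_def
  have haA : a * A = 2 * (1 + r ^ 2) := by rw [ha_def]; field_simp
  have hbB : b * B = 2 * (1 + s ^ 2) := by rw [hb_def]; field_simp
  have hBA : B ≤ A := by
    refine le_of_pow_le_pow_left₀ two_ne_zero hA0.le ?_
    rw [hA, hB]
    have := pow_le_pow_left₀ hs.le hsr 2
    linarith only [this]
  have hA2 : 2 ≤ A ^ 2 := by rw [hA]; linarith only [sq_nonneg r]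
  have hB2 : 2 ≤ B ^ 2 := by rw [hB]; linarith only [sq_nonneg s]
  have hAB0 : 0 < A * B := mul_pos hA0 hB0
  have hAB2 : 2 ≤ A * B := by
    calc (2:ℝ) ≤ B ^ 2 := hB2
    _ = B * B := sq B
    _ ≤ A * B := mul_le_mul_of_nonneg_right hBA hB0.le
  have hkey : (a - b) * (A * B) = 2 * (A - B) * (A * B + 1) := by
    linear_combination B * haA - A * hbB - 2 * B * hA + 2 * A * hB
  have hABn : 0 ≤ A - B := sub_nonneg.mpr hBA
  have hrs : 0 ≤ r - s := sub_nonneg.mpr hsr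
  have hABrs : (A - B) * (A + B) = r ^ 2 - s ^ 2 := by linear_combination hA - hB
  have hPA : P * A = r * (r - s) := by rw [hP_def]; field_simp
  have hP0 : 0 ≤ P := mul_nonneg (div_nonneg hr.le hA0.le) hrs
  have hQ0 : 0 ≤ Q := mul_nonneg hB0.le hd0
  have h2AB : 2 * (A - B) ≤ a - b := by
    have h1 : 2 * (A - B) * (A * B) ≤ (a - b) * (A * B) := by
      rw [hkey]; linarith only [hABn]
    exact le_of_mul_le_mul_right h1 hAB0
  have h3AB : a - b ≤ 3 * (A - B) := by
    have h1 : (a - b) * (A * B) ≤ 3 * (A - B) * (A * B) := by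
      rw [hkey]; linarith only [mul_nonneg hABn (by linarith only [hAB2] : (0:ℝ) ≤ A * B - 2)]
    exact le_of_mul_le_mul_right h1 hAB0
  have hPab : P ≤ a - b := by
    have h1 : P * A ≤ 2 * (A - B) * A := by
      rw [hPA]
      linarith only [hABrs, sq_nonneg (A - B), mul_nonneg hs.le hrs]
    exact le_trans (le_of_mul_le_mul_right h1 hA0) h2AB
  have hab6P : a - b ≤ 6 * P := by
    refine le_trans h3AB ?_
    have h1 : 3 * (A - B) * A ≤ 6 * P * A := by
      rw [show 6 * P * A = 6 * (P * A) by ring, hPA]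
      linarith only [hABrs, sq_nonneg (r - s), mul_nonneg hABn hB0.le]
    exact le_of_mul_le_mul_right h1 hA0
  have hab0 : 0 ≤ a - b := le_trans hP0 hPab
  have haA_low : A ≤ a := by
    have h1 : A * A ≤ a * A := by linarith only [haA, hA, sq_nonneg r, sq A]
    exact le_of_mul_le_mul_right h1 hA0
  have hbB_low : B ≤ b := by
    have h1 : B * B ≤ b * B := by linarith only [hbB, hB, sq_nonneg s, sq B]
    exact le_of_mul_le_mul_right h1 hB0
  have haA_up : a ≤ 2 * A := by
    have h1 : a * A ≤ 2 * A * A := by linarith only [haA, hA, sq A]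
    exact le_of_mul_le_mul_right h1 hA0
  have hbB_up : b ≤ 2 * B := by
    have h1 : b * B ≤ 2 * B * B := by linarith only [hbB, hB, sq B]
    exact le_of_mul_le_mul_right h1 hB0
  have ha0 : 0 < a := lt_of_lt_of_le hA0 haA_low
  have hb0 : 0 < b := lt_of_lt_of_le hB0 hbB_low
  constructor
  · -- lower bound
    have h1 : P ^ 2 ≤ (a - b) ^ 2 := pow_le_pow_left₀ hP0 hPab 2
    have hbb : B * B ≤ a * b :=
      mul_le_mul (le_trans hBA haA_low) hbB_low hB0.le ha0.le
    have h2 : Q ^ 2 ≤ a * b * d ^ 2 := by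
      calc Q ^ 2 = (B * B) * d ^ 2 := by rw [hQ_def]; ring
      _ ≤ a * b * d ^ 2 := mul_le_mul_of_nonneg_right hbb (sq_nonneg d)
    have hsq : ((1 / 2) * (P + Q)) ^ 2 ≤ N ^ 2 := by
      linarith only [h1, h2, hN, sq_nonneg (P - Q), sq_nonneg P, sq_nonneg Q]
    exact le_of_pow_le_pow_left₀ two_ne_zero hN0 hsq
  · -- upper bound
    have h1 : (a - b) ^ 2 ≤ (6 * P) ^ 2 := pow_le_pow_left₀ hab0 hab6P 2
    have hab4 : a * b ≤ (2 * A) * (2 * B) :=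
      mul_le_mul haA_up hbB_up hb0.le (by linarith only [hA0])
    have h2 : a * b * d ^ 2 ≤ 4 * (A * B) * d ^ 2 := by
      calc a * b * d ^ 2 ≤ ((2 * A) * (2 * B)) * d ^ 2 :=
        mul_le_mul_of_nonneg_right hab4 (sq_nonneg d)
      _ = 4 * (A * B) * d ^ 2 := by ring
    have hN2up : N ^ 2 ≤ 36 * P ^ 2 + 4 * (A * B) * d ^ 2 := by
      linarith only [h1, h2, hN]
    have hsq : N ^ 2 ≤ (30 * (P + Q)) ^ 2 := by
      rcases le_or_gt A (2 * B) with hc | hc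
      · have h3 : 4 * (A * B) * d ^ 2 ≤ 8 * Q ^ 2 := by
          rw [hQ_def]
          linarith only [mul_nonneg (mul_nonneg (sub_nonneg.mpr hc) hB0.le) (sq_nonneg d)]
        linarith only [hN2up, h3, sq_nonneg P, sq_nonneg Q, mul_nonneg hP0 hQ0]
      · have h4B : (2 * B) ^ 2 < A ^ 2 := by
          refine pow_lt_pow_left₀ hc (by linarith only [hB0]) two_ne_zero
        have h4B' : 8 + 4 * s ^ 2 < 2 + r ^ 2 := by
          have h6 : (2 * B) ^ 2 = 8 + 4 * s ^ 2 := by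
            rw [show (2*B)^2 = 4*B^2 by ring, hB]; ring
          rw [h6, hA] at h4B
          exact h4B
        have hr6 : 6 < r ^ 2 := by linarith only [h4B', sq_nonneg s]
        have hrs2 : 2 * s < r := by
          by_contra h
          push_neg at h
          have h5 : r ^ 2 ≤ (2 * s) ^ 2 := pow_le_pow_left₀ hr.le h 2
          linarith only [h4B', h5]
        have hPA4 : A ≤ 4 * P := by
          have h5 : A * A ≤ 4 * P * A := by
            rw [show 4 * P * A = 4 * (P * A) by ring, hPA]
            have h6 : 0 < r * (r - 2 * s) := mul_pos hr (by linarith only [hrs2])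
            linarith only [h6, hA, hr6, sq A]
          exact le_of_mul_le_mul_right h5 hA0
        have h7 : A ^ 2 ≤ 16 * P ^ 2 := by
          have := pow_le_pow_left₀ hA0.le hPA4 2
          linarith only [this]
        have hd4 : d ^ 2 ≤ 4 := by
          have := pow_le_pow_left₀ hd0 hd2 2
          linarith only [this]
        have h8 : 4 * (A * B) * d ^ 2 ≤ 256 * P ^ 2 := by
          have h9 : (A * B) * d ^ 2 ≤ (A * B) * 4 := mul_le_mul_of_nonneg_left hd4 hAB0.le
          have h10 : A * B ≤ A * A := mul_le_mul_of_nonneg_left hBA hA0.le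
          have := sq A
          linarith only [h9, h10, h7, this]
        linarith only [hN2up, h8, sq_nonneg P, sq_nonneg Q, mul_nonneg hP0 hQ0]
    exact le_of_pow_le_pow_left₀ two_ne_zero (by positivity) hsq

/-- First-derivative estimate for the symbol `H(ξ) = |ξ|√(2+|ξ|²)`: for `|ξ| ≥ |η|`,
`|∇H(ξ) - ∇H(η)| ≍ (|ξ|/⟨ξ⟩)(|ξ|-|η|) + ⟨η⟩|ξ/|ξ| - η/|η||`, with absolute constants. -/
theorem gradient_Hfun_first_estimate :
    ∃ c C : ℝ, 0 < c ∧ c ≤ C ∧ ∀ ξ η : V3, ξ ≠ 0 → η ≠ 0 → ‖η‖ ≤ ‖ξ‖ →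
      c * (‖ξ‖ / jap ξ * (‖ξ‖ - ‖η‖) + jap η * ‖‖ξ‖⁻¹ • ξ - ‖η‖⁻¹ • η‖)
          ≤ ‖gradient Hfun ξ - gradient Hfun η‖ ∧
      ‖gradient Hfun ξ - gradient Hfun η‖
          ≤ C * (‖ξ‖ / jap ξ * (‖ξ‖ - ‖η‖) + jap η * ‖‖ξ‖⁻¹ • ξ - ‖η‖⁻¹ • η‖) := by
  refine ⟨1/2, 30, by norm_num, by norm_num, fun ξ η hξ hη hsr => ?_⟩
  have hr : (0:ℝ) < ‖ξ‖ := norm_pos_iff.mpr hξ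
  have hs : (0:ℝ) < ‖η‖ := norm_pos_iff.mpr hη
  have hA0 : 0 < jap ξ := Real.sqrt_pos.mpr (by positivity)
  have hB0 : 0 < jap η := Real.sqrt_pos.mpr (by positivity)
  have hA : (jap ξ) ^ 2 = 2 + ‖ξ‖ ^ 2 := Real.sq_sqrt (by positivity)
  have hB : (jap η) ^ 2 = 2 + ‖η‖ ^ 2 := Real.sq_sqrt (by positivity)
  set u : V3 := ‖ξ‖⁻¹ • ξ with hu_def
  set v : V3 := ‖η‖⁻¹ • η with hv_def
  have hu1 : ‖u‖ = 1 := by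
    rw [hu_def, norm_smul, norm_inv, norm_norm, inv_mul_cancel₀ hr.ne']
  have hv1 : ‖v‖ = 1 := by
    rw [hv_def, norm_smul, norm_inv, norm_norm, inv_mul_cancel₀ hs.ne']
  set a : ℝ := 2 * (1 + ‖ξ‖ ^ 2) / jap ξ with ha_def
  set b : ℝ := 2 * (1 + ‖η‖ ^ 2) / jap η with hb_def
  have hgu : gradient Hfun ξ = a • u := by
    rw [(hasGradient_Hfun hξ).gradient, hu_def, smul_smul]
    congr 1
    rw [ha_def]
    field_simp
  have hgv : gradient Hfun η = b • v := by
    rw [(hasGradient_Hfun hη).gradient, hv_def, smul_smul]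
    congr 1
    rw [hb_def]
    field_simp
  have hD2 : ‖gradient Hfun ξ - gradient Hfun η‖ ^ 2
      = (a - b) ^ 2 + a * b * ‖u - v‖ ^ 2 := by
    rw [hgu, hgv]
    have h1 := norm_sub_sq_real (a • u) (b • v)
    have h2 := norm_sub_sq_real u v
    rw [norm_smul a u, norm_smul b v, real_inner_smul_left, real_inner_smul_right, hu1, hv1] at h1
    rw [hu1, hv1] at h2
    simp only [Real.norm_eq_abs, mul_one, mul_pow, sq_abs, one_pow] at h1
    simp only [one_pow] at h2
    rw [h1]
    linear_combination (-(a * b)) * h2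
  have hd2 : ‖u - v‖ ≤ 2 := by
    calc ‖u - v‖ ≤ ‖u‖ + ‖v‖ := norm_sub_le u v
    _ = 2 := by rw [hu1, hv1]; norm_num
  exact core_ineq ‖ξ‖ ‖η‖ (jap ξ) (jap η) ‖u - v‖ ‖gradient Hfun ξ - gradient Hfun η‖
    hr hs hsr hA hB hA0 hB0 (norm_nonneg _) hd2 (norm_nonneg _) hD2
end
end

section
/- Higher-derivative estimates for the symbol H(ξ) = |ξ|√(2+|ξ|²): for each k ∈ ℕ, k ≥ 1, there is a constant C_k such that (i) ‖∇^k H(ξ)‖ ≤ C_k ⟨ξ⟩ / |ξ|^{k−1} for all ξ ∈ ℝ³ \ {0}, and (ii) ‖∇^k H(ξ) − ∇^k H(η)‖ ≤ C_k ⟨ξ⟩ |ξ − η| / (|ξ| |η|^{k−1}) for all ξ, η ∈ ℝ³ \ {0} with |ξ| ≥ |η|, where ∇^k H is the k-th (Fréchet) derivative tensor and ‖·‖ its operator norm. -/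
noncomputable section

section Aux

open Set

set_option linter.unusedSectionVars false

variable {E : Type*} [NormedAddCommGroup E] [InnerProductSpace ℝ E]
  [FiniteDimensional ℝ E] [Nontrivial E]

lemma normfun_contDiffOn :
    ContDiffOn ℝ ((⊤:ℕ∞) : WithTop ℕ∞) (fun y : E => ‖y‖) {y : E | y ≠ 0} :=
  fun _ hy => (contDiffAt_norm ℝ hy).contDiffWithinAt

/-- homogeneity: `‖∇ⁿ‖·‖ (x)‖ * ‖x‖ⁿ = ‖x‖ * ‖∇ⁿ‖·‖ (u)‖` where `u = x/‖x‖`. -/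
lemma norm_iteratedFDeriv_norm_homog (n : ℕ) {x : E} (hx : x ≠ 0) :
    ‖iteratedFDeriv ℝ n (fun y : E => ‖y‖) x‖ * ‖x‖ ^ n =
      ‖x‖ * ‖iteratedFDeriv ℝ n (fun y : E => ‖y‖) (‖x‖⁻¹ • x)‖ := by
  set s : Set E := {y : E | y ≠ 0} with hs
  have hso : IsOpen s := isOpen_compl_singleton
  have hc : (0:ℝ) < ‖x‖ := norm_pos_iff.2 hx
  set c : ℝ := ‖x‖
  set u : E := c⁻¹ • x with hu
  have hux : c • u = x := by
    rw [hu, smul_smul, mul_inv_cancel₀ hc.ne', one_smul]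
  have hus : u ∈ s := by
    simp only [hs, mem_setOf_eq, hu]
    exact smul_ne_zero (inv_ne_zero hc.ne') hx
  -- the linear map `y ↦ c • y`
  set g : E →L[ℝ] E := c • ContinuousLinearMap.id ℝ E with hg
  have hgpre : ⇑g ⁻¹' s = s := by
    ext y
    simp [hg, hs, smul_ne_zero_iff, hc.ne']
  have hgx : g u ∈ s := by
    simp only [hg]
    simpa [hux, hs] using hx
  have hcomp := ContinuousLinearMap.iteratedFDerivWithin_comp_right (f := fun y : E => ‖y‖) g
    normfun_contDiffOn hso.uniqueDiffOn (by rw [hgpre]; exact hso.uniqueDiffOn) hgx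
    (i := n) (by exact_mod_cast le_top)
  -- LHS: `‖g ·‖ = c • ‖·‖`
  have hfun : (fun y : E => ‖y‖) ∘ ⇑g = c • (fun y : E => ‖y‖) := by
    funext y
    simp [hg, norm_smul, abs_of_pos hc]
  rw [hgpre, hfun] at hcomp
  have hsm : iteratedFDerivWithin ℝ n (c • fun y : E => ‖y‖) s u
      = c • iteratedFDerivWithin ℝ n (fun y : E => ‖y‖) s u :=
    iteratedFDerivWithin_const_smul_apply ((normfun_contDiffOn u hus).of_le (by exact_mod_cast le_top))
      hso.uniqueDiffOn hus
  rw [hsm] at hcomp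
  -- RHS comp with `c • id` is `cⁿ •`
  have hrhs : (iteratedFDerivWithin ℝ n (fun y : E => ‖y‖) s (g u)).compContinuousLinearMap
      (fun _ => g) = c ^ n • iteratedFDerivWithin ℝ n (fun y : E => ‖y‖) s (g u) := by
    ext m
    simp only [ContinuousMultilinearMap.compContinuousLinearMap_apply,
      ContinuousMultilinearMap.smul_apply, hg, ContinuousLinearMap.smul_apply,
      ContinuousLinearMap.coe_id', id_eq]
    rw [ContinuousMultilinearMap.map_smul_univ]
    simp
  rw [hrhs] at hcomp
  have hgu : g u = x := by simp [hg, hux]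
  rw [hgu] at hcomp
  -- translate to global iteratedFDeriv
  have e1 : iteratedFDerivWithin ℝ n (fun y : E => ‖y‖) s u
      = iteratedFDeriv ℝ n (fun y : E => ‖y‖) u := iteratedFDerivWithin_of_isOpen n hso hus
  have e2 : iteratedFDerivWithin ℝ n (fun y : E => ‖y‖) s x
      = iteratedFDeriv ℝ n (fun y : E => ‖y‖) x := iteratedFDerivWithin_of_isOpen n hso hx
  rw [e1, e2] at hcomp
  -- take norms
  have hnrm : c * ‖iteratedFDeriv ℝ n (fun y : E => ‖y‖) u‖
      = c ^ n * ‖iteratedFDeriv ℝ n (fun y : E => ‖y‖) x‖ := by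
    have h0 := congrArg norm hcomp
    rw [norm_smul c (iteratedFDeriv ℝ n (fun y : E => ‖y‖) u),
      norm_smul (c ^ n) (iteratedFDeriv ℝ n (fun y : E => ‖y‖) x)] at h0
    simpa [abs_of_pos hc, abs_of_pos (pow_pos hc n)] using h0
  linarith

lemma norm_iteratedFDeriv_norm_le (n : ℕ) :
    ∃ C : ℝ, 0 < C ∧ ∀ x : E, x ≠ 0 →
      ‖iteratedFDeriv ℝ n (fun y : E => ‖y‖) x‖ * ‖x‖ ^ n ≤ C * ‖x‖ := by
  set s : Set E := {y : E | y ≠ 0} with hs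
  have hso : IsOpen s := isOpen_compl_singleton
  have hcont : ContinuousOn (fun y : E => ‖iteratedFDeriv ℝ n (fun y : E => ‖y‖) y‖) s := by
    have h1 : ContinuousOn (iteratedFDerivWithin ℝ n (fun y : E => ‖y‖) s) s :=
      normfun_contDiffOn.continuousOn_iteratedFDerivWithin (by exact_mod_cast le_top) hso.uniqueDiffOn
    exact (h1.congr fun y hy => (iteratedFDerivWithin_of_isOpen n hso hy).symm).norm
  have hcompact : IsCompact (Metric.sphere (0:E) 1) := isCompact_sphere 0 1
  have hne : (Metric.sphere (0:E) 1).Nonempty := NormedSpace.sphere_nonempty.2 zero_le_one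
  have hsub : Metric.sphere (0:E) 1 ⊆ s := fun y hy => by
    simp only [mem_sphere_iff_norm, sub_zero] at hy
    simp [hs, show y ≠ 0 from fun h => by simp [h] at hy]
  obtain ⟨z, _, hz⟩ := hcompact.exists_isMaxOn hne (hcont.mono hsub)
  refine ⟨max ‖iteratedFDeriv ℝ n (fun y : E => ‖y‖) z‖ 1, lt_of_lt_of_le one_pos (le_max_right _ _), ?_⟩
  intro x hx
  have hc : (0:ℝ) < ‖x‖ := norm_pos_iff.2 hx
  rw [norm_iteratedFDeriv_norm_homog n hx]
  have hu : ‖x‖⁻¹ • x ∈ Metric.sphere (0:E) 1 := by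
    simp [norm_smul, abs_of_pos (inv_pos.2 hc), inv_mul_cancel₀ hc.ne']
  calc ‖x‖ * ‖iteratedFDeriv ℝ n (fun y : E => ‖y‖) (‖x‖⁻¹ • x)‖
      ≤ ‖x‖ * ‖iteratedFDeriv ℝ n (fun y : E => ‖y‖) z‖ := by
        exact mul_le_mul_of_nonneg_left (hz hu) hc.le
    _ ≤ ‖x‖ * max ‖iteratedFDeriv ℝ n (fun y : E => ‖y‖) z‖ 1 := by
        exact mul_le_mul_of_nonneg_left (le_max_left _ _) hc.le
    _ = max ‖iteratedFDeriv ℝ n (fun y : E => ‖y‖) z‖ 1 * ‖x‖ := mul_comm _ _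

lemma iteratedFDeriv_comp_add_right'' {E F : Type*} [NormedAddCommGroup E] [NormedSpace ℝ E]
    [NormedAddCommGroup F] [NormedSpace ℝ F] (f : E → F) {s : Set E} (hs : IsOpen s)
    (hf : ContDiffOn ℝ ((⊤:ℕ∞) : WithTop ℕ∞) f s) (c : E) (n : ℕ) :
    ∀ x, x + c ∈ s → iteratedFDeriv ℝ n (fun y => f (y + c)) x = iteratedFDeriv ℝ n f (x + c) := by
  induction n with
  | zero =>
    intro x hx
    ext m
    simp
  | succ n ih =>
    intro x hx
    rw [iteratedFDeriv_succ_eq_comp_left, iteratedFDeriv_succ_eq_comp_left]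
    simp only [Function.comp_apply]
    congr 1
    have hev : iteratedFDeriv ℝ n (fun y => f (y + c))
        =ᶠ[nhds x] fun y => iteratedFDeriv ℝ n f (y + c) := by
      have hopen : IsOpen {y : E | y + c ∈ s} := hs.preimage (by continuity)
      filter_upwards [hopen.mem_nhds hx] with y hy
      exact ih y hy
    rw [hev.fderiv_eq]
    have hdiff : DifferentiableAt ℝ (iteratedFDeriv ℝ n f) (x + c) := by
      have h1 : ContDiffAt ℝ ((⊤:ℕ∞) : WithTop ℕ∞) f (x + c) := hf.contDiffAt (hs.mem_nhds hx)
      have h2 : ContDiffAt ℝ 1 (iteratedFDeriv ℝ n f) (x + c) :=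
        h1.iteratedFDeriv_right (by exact_mod_cast le_top)
      exact h2.differentiableAt (by simp)
    have hcomp : HasFDerivAt (fun y => iteratedFDeriv ℝ n f (y + c))
        (fderiv ℝ (iteratedFDeriv ℝ n f) (x + c)) x := by
      have := hdiff.hasFDerivAt.comp x ((hasFDerivAt_id x).add_const c)
      exact this
    exact hcomp.fderiv

abbrev E4 := WithLp 2 (V3 × ℝ)

instance : Nontrivial E4 := (WithLp.linearEquiv 2 ℝ (V3 × ℝ)).toEquiv.nontrivial
instance : FiniteDimensional ℝ E4 := Module.Finite.equiv (WithLp.linearEquiv 2 ℝ (V3 × ℝ)).symm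

/-- norm on `E4` -/
lemma E4_norm_sq (f : E4) : ‖f‖ ^ 2 = ‖f.fst‖ ^ 2 + ‖f.snd‖ ^ 2 := by
  rw [← real_inner_self_eq_norm_sq, WithLp.prod_inner_apply,
    real_inner_self_eq_norm_sq, real_inner_self_eq_norm_sq]
  rfl

lemma E4_norm (f : E4) : ‖f‖ = Real.sqrt (‖f.fst‖ ^ 2 + ‖f.snd‖ ^ 2) := by
  rw [← E4_norm_sq, Real.sqrt_sq (norm_nonneg f)]

def Lmap : V3 →ₗᵢ[ℝ] E4 where
  toLinearMap := ((WithLp.linearEquiv 2 ℝ (V3 × ℝ)).symm.toLinearMap).comp (LinearMap.inl ℝ V3 ℝ)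
  norm_map' := by
    intro x
    rw [E4_norm]
    simp [Real.sqrt_sq (norm_nonneg x)]

def cvec : E4 := (WithLp.equiv 2 (V3 × ℝ)).symm (0, Real.sqrt 2)

lemma jap_eq (ξ : V3) : jap ξ = ‖Lmap ξ + cvec‖ := by
  rw [E4_norm]
  have h1 : (Lmap ξ + cvec).fst = ξ := by
    simp [Lmap, cvec]
  have h2 : (Lmap ξ + cvec).snd = Real.sqrt 2 := by
    simp [Lmap, cvec]
  rw [h1, h2, jap]
  rw [Real.norm_eq_abs, sq_abs, Real.sq_sqrt (by norm_num : (2:ℝ) ≥ 0)]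
  ring_nf

lemma Lc_ne_zero (ξ : V3) : Lmap ξ + cvec ≠ 0 := by
  intro h
  have h1 : jap ξ = 0 := by rw [jap_eq, h, norm_zero]
  have h2 : 0 < jap ξ := Real.sqrt_pos.2 (by positivity)
  linarith

lemma jap_pos (ξ : V3) : 0 < jap ξ := Real.sqrt_pos.2 (by positivity)

lemma norm_le_jap (ξ : V3) : ‖ξ‖ ≤ jap ξ := by
  rw [jap]
  have : ‖ξ‖ = Real.sqrt (‖ξ‖ ^ 2) := (Real.sqrt_sq (norm_nonneg ξ)).symm
  rw [this]
  exact Real.sqrt_le_sqrt (by nlinarith [Real.sq_sqrt (show (0:ℝ) ≤ ‖ξ‖^2 from by positivity)])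

lemma jap_mono {ξ η : V3} (h : ‖η‖ ≤ ‖ξ‖) : jap η ≤ jap ξ :=
  Real.sqrt_le_sqrt (by nlinarith [norm_nonneg η])

set_option maxHeartbeats 3000000 in
set_option synthInstance.maxHeartbeats 3000000 in
/-- derivative bounds for `jap` -/
lemma norm_iteratedFDeriv_jap_le (n : ℕ) :
    ∃ C : ℝ, 0 < C ∧ ∀ ξ : V3,
      ‖iteratedFDeriv ℝ n jap ξ‖ * (jap ξ) ^ n ≤ C * jap ξ := by
  obtain ⟨C, hC, hb⟩ := norm_iteratedFDeriv_norm_le (E := E4) n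
  refine ⟨C, hC, fun ξ => ?_⟩
  set g : E4 → ℝ := fun y => ‖y + cvec‖ with hg
  set s : Set E4 := {y : E4 | y + cvec ≠ 0} with hsdef
  have hso : IsOpen s := isOpen_compl_singleton.preimage (by continuity)
  have hgc : ContDiffOn ℝ ((⊤:ℕ∞) : WithTop ℕ∞) g s := by
    intro y hy
    exact (((contDiffAt_norm ℝ (hy : y + cvec ≠ 0)).comp y
      ((contDiffAt_id).add contDiffAt_const))).contDiffWithinAt
  have hLs : ⇑Lmap.toContinuousLinearMap ⁻¹' s = univ := by
    ext ξ'
    simp only [mem_preimage, mem_univ, iff_true, hsdef, mem_setOf_eq]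
    exact Lc_ne_zero ξ'
  have hLx : Lmap.toContinuousLinearMap ξ ∈ s := Lc_ne_zero ξ
  have hcomp := ContinuousLinearMap.iteratedFDerivWithin_comp_right
    (f := g) Lmap.toContinuousLinearMap hgc hso.uniqueDiffOn
    (by rw [hLs]; exact uniqueDiffOn_univ) hLx (i := n) (by exact_mod_cast le_top)
  rw [hLs, iteratedFDerivWithin_univ] at hcomp
  have hgl : g ∘ ⇑Lmap.toContinuousLinearMap = jap := by
    funext ξ'
    simp only [Function.comp_apply, hg]
    exact (jap_eq ξ').symm
  rw [hgl] at hcomp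
  -- norm inequality from composition
  have hnorm : ‖iteratedFDeriv ℝ n jap ξ‖ ≤
      ‖iteratedFDerivWithin ℝ n g s (Lmap.toContinuousLinearMap ξ)‖ := by
    rw [hcomp]
    refine le_trans (ContinuousMultilinearMap.norm_compContinuousLinearMap_le _ _) ?_
    have hL1 : ‖Lmap.toContinuousLinearMap‖ ≤ 1 := by
      refine ContinuousLinearMap.opNorm_le_bound _ zero_le_one fun x => ?_
      simp [Lmap.norm_map]
    calc ‖iteratedFDerivWithin ℝ n g s (Lmap.toContinuousLinearMap ξ)‖ *
          ∏ _i : Fin n, ‖Lmap.toContinuousLinearMap‖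
        ≤ ‖iteratedFDerivWithin ℝ n g s (Lmap.toContinuousLinearMap ξ)‖ * ∏ _i : Fin n, 1 := by
          gcongr with i
      _ = ‖iteratedFDerivWithin ℝ n g s (Lmap.toContinuousLinearMap ξ)‖ := by simp
  -- translate
  have htrans : iteratedFDerivWithin ℝ n g s (Lmap.toContinuousLinearMap ξ)
      = iteratedFDeriv ℝ n (fun y : E4 => ‖y‖) (Lmap.toContinuousLinearMap ξ + cvec) := by
    rw [iteratedFDerivWithin_of_isOpen n hso hLx]
    exact iteratedFDeriv_comp_add_right'' (fun y : E4 => ‖y‖) isOpen_compl_singleton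
      (fun y hy => (contDiffAt_norm ℝ (hy : y ≠ 0)).contDiffWithinAt) cvec n
      _ (Lc_ne_zero ξ)
  have hfinal := hb (Lmap.toContinuousLinearMap ξ + cvec) (Lc_ne_zero ξ)
  have hje : ‖(Lmap.toContinuousLinearMap ξ : E4) + cvec‖ = jap ξ := (jap_eq ξ).symm
  rw [hje] at hfinal
  calc ‖iteratedFDeriv ℝ n jap ξ‖ * jap ξ ^ n
      ≤ ‖iteratedFDeriv ℝ n (fun y : E4 => ‖y‖) (Lmap.toContinuousLinearMap ξ + cvec)‖
        * jap ξ ^ n := by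
        refine mul_le_mul_of_nonneg_right ?_ (pow_nonneg (jap_pos ξ).le n)
        rw [← htrans]; exact hnorm
    _ ≤ C * jap ξ := hfinal


lemma jap_contDiff : ContDiff ℝ ((⊤:ℕ∞) : WithTop ℕ∞) jap := by
  have : ContDiff ℝ ((⊤:ℕ∞) : WithTop ℕ∞) fun x : V3 => 2 + ‖x‖ ^ 2 :=
    contDiff_const.add (contDiff_norm_sq ℝ)
  exact this.sqrt fun x => by positivity

lemma Hfun_deriv_bound (n : ℕ) :
    ∃ C : ℝ, 0 < C ∧ ∀ ξ : V3, ξ ≠ 0 →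
      ‖iteratedFDeriv ℝ n Hfun ξ‖ * ‖ξ‖ ^ n ≤ C * (‖ξ‖ * jap ξ) := by
  classical
  set CN : ℕ → ℝ := fun i => (norm_iteratedFDeriv_norm_le (E := V3) i).choose with hCNdef
  have hCN : ∀ i, 0 < CN i ∧ ∀ x : V3, x ≠ 0 →
      ‖iteratedFDeriv ℝ i (fun y : V3 => ‖y‖) x‖ * ‖x‖ ^ i ≤ CN i * ‖x‖ :=
    fun i => (norm_iteratedFDeriv_norm_le (E := V3) i).choose_spec
  set CJ : ℕ → ℝ := fun j => (norm_iteratedFDeriv_jap_le j).choose with hCJdef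
  have hCJ : ∀ j, 0 < CJ j ∧ ∀ x : V3,
      ‖iteratedFDeriv ℝ j jap x‖ * (jap x) ^ j ≤ CJ j * jap x :=
    fun j => (norm_iteratedFDeriv_jap_le j).choose_spec
  refine ⟨∑ i ∈ Finset.range (n+1), (n.choose i : ℝ) * CN i * CJ (n - i), ?_, ?_⟩
  · refine Finset.sum_pos (fun i hi => ?_) ⟨0, Finset.mem_range.2 (Nat.succ_pos n)⟩
    have h1 : 0 < (n.choose i : ℝ) := by
      have := Nat.choose_pos (Nat.lt_succ_iff.1 (Finset.mem_range.1 hi))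
      exact_mod_cast this
    exact mul_pos (mul_pos h1 (hCN i).1) (hCJ (n-i)).1
  intro ξ hξ
  set s : Set V3 := {y : V3 | y ≠ 0} with hsdef
  have hso : IsOpen s := isOpen_compl_singleton
  have hmul := norm_iteratedFDerivWithin_mul_le (𝕜 := ℝ) (A := ℝ)
    (f := fun y : V3 => ‖y‖) (g := jap) (N := ((⊤:ℕ∞) : WithTop ℕ∞))
    normfun_contDiffOn jap_contDiff.contDiffOn hso.uniqueDiffOn (x := ξ) hξ (n := n)
    (by exact_mod_cast le_top)
  have hHW : iteratedFDerivWithin ℝ n (fun y : V3 => ‖y‖ * jap y) s ξ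
      = iteratedFDeriv ℝ n Hfun ξ := by
    have : (fun y : V3 => ‖y‖ * jap y) = Hfun := rfl
    rw [this]
    exact iteratedFDerivWithin_of_isOpen n hso hξ
  rw [hHW] at hmul
  have hterm : ∀ i ∈ Finset.range (n+1),
      (n.choose i : ℝ) * ‖iteratedFDerivWithin ℝ i (fun y : V3 => ‖y‖) s ξ‖ *
        ‖iteratedFDerivWithin ℝ (n-i) jap s ξ‖ * ‖ξ‖ ^ n ≤
      ((n.choose i : ℝ) * CN i * CJ (n - i)) * (‖ξ‖ * jap ξ) := by
    intro i hi
    have hin : i ≤ n := Nat.lt_succ_iff.1 (Finset.mem_range.1 hi)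
    have eW1 : iteratedFDerivWithin ℝ i (fun y : V3 => ‖y‖) s ξ
        = iteratedFDeriv ℝ i (fun y : V3 => ‖y‖) ξ := iteratedFDerivWithin_of_isOpen i hso hξ
    have eW2 : iteratedFDerivWithin ℝ (n-i) jap s ξ
        = iteratedFDeriv ℝ (n-i) jap ξ := iteratedFDerivWithin_of_isOpen (n-i) hso hξ
    rw [eW1, eW2]
    have e : ‖ξ‖ ^ n = ‖ξ‖ ^ i * ‖ξ‖ ^ (n - i) := by
      rw [← pow_add]; congr 1; omega
    have h1 := (hCN i).2 ξ hξ
    have h2 : ‖iteratedFDeriv ℝ (n-i) jap ξ‖ * ‖ξ‖ ^ (n-i) ≤ CJ (n-i) * jap ξ := by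
      refine le_trans ?_ ((hCJ (n-i)).2 ξ)
      refine mul_le_mul_of_nonneg_left ?_ (norm_nonneg _)
      exact pow_le_pow_left₀ (norm_nonneg ξ) (norm_le_jap ξ) (n-i)
    have hnn1 : (0:ℝ) ≤ ‖iteratedFDeriv ℝ (n-i) jap ξ‖ * ‖ξ‖ ^ (n-i) := by positivity
    have hnn2 : (0:ℝ) ≤ CN i * ‖ξ‖ := by
      exact mul_nonneg (hCN i).1.le (norm_nonneg ξ)
    calc (n.choose i : ℝ) * ‖iteratedFDeriv ℝ i (fun y : V3 => ‖y‖) ξ‖ *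
          ‖iteratedFDeriv ℝ (n-i) jap ξ‖ * ‖ξ‖ ^ n
        = (n.choose i : ℝ) * ((‖iteratedFDeriv ℝ i (fun y : V3 => ‖y‖) ξ‖ * ‖ξ‖ ^ i) *
            (‖iteratedFDeriv ℝ (n-i) jap ξ‖ * ‖ξ‖ ^ (n-i))) := by rw [e]; ring
      _ ≤ (n.choose i : ℝ) * ((CN i * ‖ξ‖) * (CJ (n-i) * jap ξ)) := by
          refine mul_le_mul_of_nonneg_left ?_ (by positivity)
          exact mul_le_mul h1 h2 hnn1 hnn2
      _ = ((n.choose i : ℝ) * CN i * CJ (n - i)) * (‖ξ‖ * jap ξ) := by ring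
  calc ‖iteratedFDeriv ℝ n Hfun ξ‖ * ‖ξ‖ ^ n
      ≤ (∑ i ∈ Finset.range (n+1), (n.choose i : ℝ) *
          ‖iteratedFDerivWithin ℝ i (fun y : V3 => ‖y‖) s ξ‖ *
          ‖iteratedFDerivWithin ℝ (n-i) jap s ξ‖) * ‖ξ‖ ^ n := by
        exact mul_le_mul_of_nonneg_right hmul (by positivity)
    _ = ∑ i ∈ Finset.range (n+1), (n.choose i : ℝ) *
          ‖iteratedFDerivWithin ℝ i (fun y : V3 => ‖y‖) s ξ‖ *
          ‖iteratedFDerivWithin ℝ (n-i) jap s ξ‖ * ‖ξ‖ ^ n := Finset.sum_mul _ _ _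
    _ ≤ ∑ i ∈ Finset.range (n+1), ((n.choose i : ℝ) * CN i * CJ (n - i)) * (‖ξ‖ * jap ξ) :=
        Finset.sum_le_sum hterm
    _ = (∑ i ∈ Finset.range (n+1), (n.choose i : ℝ) * CN i * CJ (n - i)) * (‖ξ‖ * jap ξ) :=
        (Finset.sum_mul _ _ _).symm

lemma Hfun_contDiffAt {ξ : V3} (hξ : ξ ≠ 0) :
    ContDiffAt ℝ ((⊤:ℕ∞) : WithTop ℕ∞) Hfun ξ :=
  (contDiffAt_norm ℝ hξ).mul jap_contDiff.contDiffAt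

end Aux

/-- Higher-derivative estimates for `H(ξ) = |ξ|√(2+|ξ|²)`: for each `k ≥ 1`,
`‖∇^k H(ξ)‖ ≲ ⟨ξ⟩/|ξ|^{k-1}` and, for `|ξ| ≥ |η|`,
`‖∇^k H(ξ) - ∇^k H(η)‖ ≲ ⟨ξ⟩|ξ-η|/(|ξ||η|^{k-1})`. -/
theorem iteratedFDeriv_Hfun_bounds (k : ℕ) (hk : 1 ≤ k) :
    ∃ C : ℝ, 0 < C ∧
      (∀ ξ : V3, ξ ≠ 0 →
        ‖iteratedFDeriv ℝ k Hfun ξ‖ ≤ C * jap ξ / ‖ξ‖ ^ (k - 1)) ∧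
      (∀ ξ η : V3, ξ ≠ 0 → η ≠ 0 → ‖η‖ ≤ ‖ξ‖ →
        ‖iteratedFDeriv ℝ k Hfun ξ - iteratedFDeriv ℝ k Hfun η‖ ≤
          C * jap ξ * ‖ξ - η‖ / (‖ξ‖ * ‖η‖ ^ (k - 1))) := by
  obtain ⟨Ck, hCk, hbk⟩ := Hfun_deriv_bound k
  obtain ⟨Ck1, hCk1, hbk1⟩ := Hfun_deriv_bound (k+1)
  set C : ℝ := max (6 * Ck) (3 ^ (k+1) * Ck1) with hCdef
  have hCpos : 0 < C := lt_of_lt_of_le (by positivity) (le_max_left _ _)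
  have hC1 : 6 * Ck ≤ C := le_max_left _ _
  have hC2 : 3 ^ (k+1) * Ck1 ≤ C := le_max_right _ _
  -- basic: level-k bound in product form, with k-1 exponent
  have hbk' : ∀ ξ : V3, ξ ≠ 0 →
      ‖iteratedFDeriv ℝ k Hfun ξ‖ * ‖ξ‖ ^ (k-1) ≤ Ck * jap ξ := by
    intro ξ hξ
    have hpos : (0:ℝ) < ‖ξ‖ := norm_pos_iff.2 hξ
    have e : ‖ξ‖ ^ k = ‖ξ‖ ^ (k-1) * ‖ξ‖ := by rw [← pow_succ]; congr 1; omega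
    have := hbk ξ hξ
    rw [e] at this
    have h2 : (‖iteratedFDeriv ℝ k Hfun ξ‖ * ‖ξ‖ ^ (k-1)) * ‖ξ‖ ≤ (Ck * jap ξ) * ‖ξ‖ := by
      calc (‖iteratedFDeriv ℝ k Hfun ξ‖ * ‖ξ‖ ^ (k-1)) * ‖ξ‖
          = ‖iteratedFDeriv ℝ k Hfun ξ‖ * (‖ξ‖ ^ (k-1) * ‖ξ‖) := by ring
        _ ≤ Ck * (‖ξ‖ * jap ξ) := this
        _ = (Ck * jap ξ) * ‖ξ‖ := by ring
    exact le_of_mul_le_mul_right h2 hpos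
  refine ⟨C, hCpos, ?_, ?_⟩
  · -- part (i)
    intro ξ hξ
    have hpos : (0:ℝ) < ‖ξ‖ := norm_pos_iff.2 hξ
    rw [le_div_iff₀ (pow_pos hpos (k-1))]
    calc ‖iteratedFDeriv ℝ k Hfun ξ‖ * ‖ξ‖ ^ (k-1) ≤ Ck * jap ξ := hbk' ξ hξ
      _ ≤ C * jap ξ := by
          refine mul_le_mul_of_nonneg_right ?_ (jap_pos ξ).le
          linarith
  · -- part (ii)
    intro ξ η hξ hη hle
    have hξpos : (0:ℝ) < ‖ξ‖ := norm_pos_iff.2 hξ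
    have hηpos : (0:ℝ) < ‖η‖ := norm_pos_iff.2 hη
    set d : ℝ := ‖ξ - η‖ with hddef
    have hdnn : 0 ≤ d := norm_nonneg _
    set q : ℝ := ‖η‖ ^ (k-1) with hqdef
    have hqpos : 0 < q := pow_pos hηpos _
    rw [le_div_iff₀ (by positivity : (0:ℝ) < ‖ξ‖ * ‖η‖ ^ (k-1))]
    by_cases hcase : ‖η‖ ≤ 2 * d
    · -- case B : triangle inequality
      have hξ3 : ‖ξ‖ ≤ 3 * d := by
        have := norm_sub_norm_le ξ η
        simp only [← hddef] at this
        linarith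
      have hqp : q ≤ ‖ξ‖ ^ (k-1) := pow_le_pow_left₀ hηpos.le hle _
      set a := ‖iteratedFDeriv ℝ k Hfun ξ‖ with hadef
      set b := ‖iteratedFDeriv ℝ k Hfun η‖ with hbdef
      have ha : 0 ≤ a := norm_nonneg _
      have hb : 0 ≤ b := norm_nonneg _
      have h1 : a * ‖ξ‖ ^ (k-1) ≤ Ck * jap ξ := hbk' ξ hξ
      have h2 : b * q ≤ Ck * jap η := hbk' η hη
      have h2' : b * q ≤ Ck * jap ξ :=
        le_trans h2 (mul_le_mul_of_nonneg_left (jap_mono hle) hCk.le)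
      have h1' : a * q ≤ Ck * jap ξ :=
        le_trans (mul_le_mul_of_nonneg_left hqp ha) h1
      have htri : ‖iteratedFDeriv ℝ k Hfun ξ - iteratedFDeriv ℝ k Hfun η‖ ≤ a + b :=
        norm_sub_le _ _
      calc ‖iteratedFDeriv ℝ k Hfun ξ - iteratedFDeriv ℝ k Hfun η‖ * (‖ξ‖ * q)
          ≤ (a + b) * (‖ξ‖ * q) := by
            exact mul_le_mul_of_nonneg_right htri (by positivity)
        _ = a * q * ‖ξ‖ + b * q * ‖ξ‖ := by ring
        _ ≤ (Ck * jap ξ) * (3 * d) + (Ck * jap ξ) * (3 * d) := by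
            refine add_le_add ?_ ?_
            · exact mul_le_mul h1' hξ3 hξpos.le (mul_nonneg hCk.le (jap_pos ξ).le)
            · exact mul_le_mul h2' hξ3 hξpos.le (mul_nonneg hCk.le (jap_pos ξ).le)
        _ = (6 * Ck) * jap ξ * d := by ring
        _ ≤ C * jap ξ * d := by
            refine mul_le_mul_of_nonneg_right ?_ hdnn
            exact mul_le_mul_of_nonneg_right hC1 (jap_pos ξ).le
    · -- case A : mean value on a ball
      push_neg at hcase
      have hd2 : d < ‖η‖ / 2 := by linarith
      set s : Set V3 := Metric.ball η (2/3 * ‖η‖) with hsdef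
      have hηs : η ∈ s := Metric.mem_ball_self (by positivity)
      have hξs : ξ ∈ s := by
        simp only [hsdef, Metric.mem_ball, dist_eq_norm]
        calc ‖ξ - η‖ < ‖η‖ / 2 := hd2
          _ < 2/3 * ‖η‖ := by linarith
      have hζfacts : ∀ ζ ∈ s, ζ ≠ 0 ∧ ‖η‖ / 3 ≤ ‖ζ‖ ∧ jap ζ ≤ 2 * jap ξ := by
        intro ζ hζ
        simp only [hsdef, Metric.mem_ball, dist_eq_norm] at hζ
        have hlow : ‖η‖ / 3 ≤ ‖ζ‖ := by
          have := norm_sub_norm_le η ζ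
          have hζη : ‖η - ζ‖ = ‖ζ - η‖ := norm_sub_rev _ _
          linarith [hζη ▸ this]
        have hup : ‖ζ‖ ≤ 2 * ‖ξ‖ := by
          have := norm_le_norm_add_norm_sub' ζ η
          have h5 : ‖ζ‖ ≤ ‖η‖ + ‖ζ - η‖ := by
            calc ‖ζ‖ = ‖η + (ζ - η)‖ := by congr 1; abel
              _ ≤ ‖η‖ + ‖ζ - η‖ := norm_add_le _ _
          linarith
        refine ⟨fun h0 => by simp [h0] at hlow; nlinarith, hlow, ?_⟩
        have : jap ζ ≤ Real.sqrt (4 * (2 + ‖ξ‖ ^ 2)) := by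
          rw [jap]
          refine Real.sqrt_le_sqrt ?_
          nlinarith [norm_nonneg ζ, norm_nonneg ξ]
        calc jap ζ ≤ Real.sqrt (4 * (2 + ‖ξ‖ ^ 2)) := this
          _ = 2 * jap ξ := by
            have h4 : Real.sqrt 4 = 2 := by
              rw [show (4:ℝ) = 2^2 by norm_num, Real.sqrt_sq (by norm_num : (0:ℝ) ≤ 2)]
            rw [Real.sqrt_mul (by norm_num : (0:ℝ) ≤ 4), jap, h4]
      set M : ℝ := (2 * 3^k * Ck1 * jap ξ) / ‖η‖ ^ k with hMdef
      have hdiff : ∀ ζ ∈ s, DifferentiableAt ℝ (iteratedFDeriv ℝ k Hfun) ζ := by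
        intro ζ hζ
        obtain ⟨hζ0, -, -⟩ := hζfacts ζ hζ
        have := (Hfun_contDiffAt hζ0).iteratedFDeriv_right (i := k)
          (by exact_mod_cast le_top : ((1:ℕ∞) : WithTop ℕ∞) + k ≤ ((⊤:ℕ∞) : WithTop ℕ∞))
        exact this.differentiableAt (by simp)
      have hbound : ∀ ζ ∈ s, ‖fderiv ℝ (iteratedFDeriv ℝ k Hfun) ζ‖ ≤ M := by
        intro ζ hζ
        obtain ⟨hζ0, hlow, hjap⟩ := hζfacts ζ hζ
        have hζpos : (0:ℝ) < ‖ζ‖ := norm_pos_iff.2 hζ0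
        -- identify fderiv norm with (k+1)-st derivative norm
        have hfd : ‖fderiv ℝ (iteratedFDeriv ℝ k Hfun) ζ‖
            = ‖iteratedFDeriv ℝ (k+1) Hfun ζ‖ := by
          rw [iteratedFDeriv_succ_eq_comp_left]
          simp only [Function.comp_apply]
          rw [LinearIsometryEquiv.norm_map]
        rw [hfd]
        -- bound via level-(k+1) estimate
        have hb1 := hbk1 ζ hζ0
        have e : ‖ζ‖ ^ (k+1) = ‖ζ‖ ^ k * ‖ζ‖ := pow_succ _ _
        rw [e] at hb1
        have h3 : ‖iteratedFDeriv ℝ (k+1) Hfun ζ‖ * ‖ζ‖ ^ k ≤ Ck1 * jap ζ := by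
          have h2 : (‖iteratedFDeriv ℝ (k+1) Hfun ζ‖ * ‖ζ‖ ^ k) * ‖ζ‖
              ≤ (Ck1 * jap ζ) * ‖ζ‖ := by
            calc (‖iteratedFDeriv ℝ (k+1) Hfun ζ‖ * ‖ζ‖ ^ k) * ‖ζ‖
                = ‖iteratedFDeriv ℝ (k+1) Hfun ζ‖ * (‖ζ‖ ^ k * ‖ζ‖) := by ring
              _ ≤ Ck1 * (‖ζ‖ * jap ζ) := hb1
              _ = (Ck1 * jap ζ) * ‖ζ‖ := by ring
          exact le_of_mul_le_mul_right h2 hζpos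
        rw [hMdef, le_div_iff₀ (pow_pos hηpos k)]
        have hlowk : (‖η‖ / 3) ^ k ≤ ‖ζ‖ ^ k := pow_le_pow_left₀ (by positivity) hlow k
        have h33 : (‖η‖/3 : ℝ) ^ k * 3 ^ k = ‖η‖ ^ k := by
          rw [← mul_pow]
          congr 1
          field_simp
        calc ‖iteratedFDeriv ℝ (k+1) Hfun ζ‖ * ‖η‖ ^ k
            = (‖iteratedFDeriv ℝ (k+1) Hfun ζ‖ * (‖η‖/3) ^ k) * 3 ^ k := by
              rw [mul_assoc, h33]
          _ ≤ (‖iteratedFDeriv ℝ (k+1) Hfun ζ‖ * ‖ζ‖ ^ k) * 3 ^ k := by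
              refine mul_le_mul_of_nonneg_right ?_ (by positivity)
              exact mul_le_mul_of_nonneg_left hlowk (norm_nonneg _)
          _ ≤ (Ck1 * jap ζ) * 3 ^ k := by
              exact mul_le_mul_of_nonneg_right h3 (by positivity)
          _ ≤ (Ck1 * (2 * jap ξ)) * 3 ^ k := by
              refine mul_le_mul_of_nonneg_right ?_ (by positivity)
              exact mul_le_mul_of_nonneg_left hjap hCk1.le
          _ = 2 * 3 ^ k * Ck1 * jap ξ := by ring
      have hmv := Convex.norm_image_sub_le_of_norm_fderiv_le hdiff hbound
        (convex_ball η (2/3 * ‖η‖)) hηs hξs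
      have hξ32 : ‖ξ‖ ≤ 3/2 * ‖η‖ := by
        have h5 : ‖ξ‖ ≤ ‖η‖ + ‖ξ - η‖ := by
          calc ‖ξ‖ = ‖η + (ξ - η)‖ := by congr 1; abel
            _ ≤ ‖η‖ + ‖ξ - η‖ := norm_add_le _ _
        rw [← hddef] at h5
        linarith
      have e : ‖η‖ ^ k = ‖η‖ * q := by rw [hqdef, ← pow_succ']; congr 1; omega
      calc ‖iteratedFDeriv ℝ k Hfun ξ - iteratedFDeriv ℝ k Hfun η‖ * (‖ξ‖ * q)
          ≤ (M * d) * (‖ξ‖ * q) := by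
            refine mul_le_mul_of_nonneg_right ?_ (mul_pos hξpos hqpos).le
            exact hmv
        _ = (2 * 3^k * Ck1 * jap ξ) * d * ‖ξ‖ * q / ‖η‖ ^ k := by
            rw [hMdef]; ring
        _ ≤ C * jap ξ * d := by
            rw [div_le_iff₀ (pow_pos hηpos k)]
            calc (2 * 3^k * Ck1 * jap ξ) * d * ‖ξ‖ * q
                ≤ (2 * 3^k * Ck1 * jap ξ) * d * (3/2 * ‖η‖) * q := by
                  refine mul_le_mul_of_nonneg_right ?_ hqpos.le
                  refine mul_le_mul_of_nonneg_left hξ32 ?_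
                  exact mul_nonneg (mul_nonneg (mul_nonneg (by positivity : (0:ℝ) ≤ 2*3^k)
                    hCk1.le) (jap_pos ξ).le) hdnn
              _ = ((3 ^ (k+1) * Ck1) * jap ξ * d) * (‖η‖ * q) := by ring
              _ ≤ (C * jap ξ * d) * (‖η‖ * q) := by
                  refine mul_le_mul_of_nonneg_right ?_ (mul_pos hηpos hqpos).le
                  refine mul_le_mul_of_nonneg_right ?_ hdnn
                  exact mul_le_mul_of_nonneg_right hC2 (jap_pos ξ).le
              _ = C * jap ξ * d * ‖η‖ ^ k := by rw [e]
end
end
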